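/- Region equivalence is compatible with rectangular guards: if ν₁ ~ ν₂ are region-equivalent valuations in ℝ≥0² and φ is a conjunction of constraints of the form z ⋈ k with k ≤ cmax a natural number and ⋈ ∈ {<, ≤, =, ≥, >}, then ν₁ satisfies φ if and only if ν₂ satisfies φ. -/
import Mathlib


/-- Nonnegative valuations on two variables. -/
def Val : Type := {v : ℝ × ℝ // 0 ≤ v.1 ∧ 0 ≤ v.2}

/-- Two coordinate values match: either both exceed `cmax`, or they have the
same integer part and their fractional parts are simultaneously zero. -/
def coordEq (cmax : ℕ) (a b : ℝ) : Prop :=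
  ((cmax : ℝ) < a ∧ (cmax : ℝ) < b) ∨
    (⌊a⌋ = ⌊b⌋ ∧ (Int.fract a = 0 ↔ Int.fract b = 0))

/-- Region equivalence on `ℝ≥0²`. -/
def regEquiv (cmax : ℕ) (v w : Val) : Prop :=
  coordEq cmax v.1.1 w.1.1 ∧ coordEq cmax v.1.2 w.1.2 ∧
  ((v.1.1 ≤ (cmax : ℝ) ∧ v.1.2 ≤ (cmax : ℝ) ∧
      Int.fract v.1.1 ≠ 0 ∧ Int.fract v.1.2 ≠ 0) →
    ((Int.fract v.1.1 ≤ Int.fract v.1.2 ↔ Int.fract w.1.1 ≤ Int.fract w.1.2) ∧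
     (Int.fract v.1.2 ≤ Int.fract v.1.1 ↔ Int.fract w.1.2 ≤ Int.fract w.1.1)))

/-- Comparison operators appearing in rectangular constraints. -/
inductive GRel | lt | le | eq | ge | gt

/-- Satisfaction of an atomic constraint `z ⋈ k`. -/
def GRel.holds : GRel → ℝ → ℝ → Prop
  | .lt, a, k => a < k
  | .le, a, k => a ≤ k
  | .eq, a, k => a = k
  | .ge, a, k => k ≤ a
  | .gt, a, k => k < a

lemma eq_nat_iff (x : ℝ) (k : ℕ) : (x = k ↔ ⌊x⌋ = k ∧ Int.fract x = 0) := by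
  constructor
  · rintro rfl
    simp [Int.fract]
  · rintro ⟨h1, h2⟩
    have := Int.fract_add_floor x
    rw [h2, h1] at this
    simpa using this.symm

lemma lt_nat_iff (x : ℝ) (k : ℕ) : (x < k ↔ ⌊x⌋ < (k : ℤ)) := by
  rw [Int.floor_lt]; push_cast; rfl

lemma ge_nat_iff (x : ℝ) (k : ℕ) : ((k : ℝ) ≤ x ↔ (k : ℤ) ≤ ⌊x⌋) := by
  rw [Int.le_floor]; push_cast; rfl

lemma atom_iff (cmax : ℕ) {a b : ℝ} (h : coordEq cmax a b) (r : GRel) (k : ℕ)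
    (hk : k ≤ cmax) : r.holds a k ↔ r.holds b k := by
  rcases h with ⟨h1, h2⟩ | ⟨hf, hz⟩
  · have hka : (k : ℝ) < a := lt_of_le_of_lt (by exact_mod_cast hk) h1
    have hkb : (k : ℝ) < b := lt_of_le_of_lt (by exact_mod_cast hk) h2
    cases r <;> simp only [GRel.holds] <;> constructor <;> intro <;> linarith
  · cases r
    · simp only [GRel.holds, lt_nat_iff, hf]
    · simp only [GRel.holds, le_iff_lt_or_eq, lt_nat_iff, eq_nat_iff, hf, hz]
    · simp only [GRel.holds, eq_nat_iff, hf, hz]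
    · simp only [GRel.holds, ge_nat_iff, hf]
    · show (k : ℝ) < a ↔ (k : ℝ) < b
      rw [← not_le, ← not_le, le_iff_lt_or_eq, le_iff_lt_or_eq, lt_nat_iff,
        lt_nat_iff, eq_nat_iff, eq_nat_iff, hf, hz]

/-- A rectangular guard is a conjunction (list) of atomic constraints; each
atom names a coordinate (`true` = first), a relation, and a constant. -/
def satisfies (v : Val) (φ : List (Bool × GRel × ℕ)) : Prop :=
  ∀ c ∈ φ, c.2.1.holds (if c.1 then v.1.1 else v.1.2) (c.2.2 : ℝ)

/-- Region equivalence is compatible with rectangular guards whose constants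
are at most `cmax`. -/
theorem stmt_16 (cmax : ℕ) (v w : Val) (h : regEquiv cmax v w)
    (φ : List (Bool × GRel × ℕ)) (hφ : ∀ c ∈ φ, c.2.2 ≤ cmax) :
    satisfies v φ ↔ satisfies w φ := by
  unfold satisfies
  apply forall₂_congr
  intro c hc
  cases hcb : c.1 <;> simp only [if_pos, if_neg, Bool.false_eq_true, not_false_iff, if_true]
  · exact atom_iff cmax h.2.1 c.2.1 c.2.2 (hφ c hc)
  · exact atom_iff cmax h.1 c.2.1 c.2.2 (hφ c hc)
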